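/- Let λ, μ : F^× → N be continuous group homomorphisms. If there exists a GL_n(F)-equivariant group isomorphism E(λ) → E(μ) that restricts to the identity on the common subgroup v_r(N) and commutes with the degree maps to ℤ (i.e., the extensions E(λ) and E(μ) of ℤ by v_r(N) are equivalent), then λ = μ. In other words, the map λ ↦ c_λ from continuous homomorphisms F^× → N to equivalence classes of extensions of ℤ by v_r(N) is injective. -/

import Mathlib

open Matrix

/-- The submodule of `Fin n → F` spanned by the first `r` standard basis vectors. -/
def stdFlag (F : Type*) [Field F] (n r : ℕ) : Submodule F (Fin n → F) where
  carrier := {v | ∀ i : Fin n, r ≤ (i : ℕ) → v i = 0}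
  add_mem' := fun {a b} ha hb i hi => by simp [ha i hi, hb i hi]
  zero_mem' := fun i _ => rfl
  smul_mem' := fun c {v} hv i hi => by simp [hv i hi]

/-- The block upper-triangularity condition cutting out the maximal parabolic of type
`(r, n-r)`: the `(i,j)` entry vanishes whenever `i ≥ r` and `j < r`. -/
def IsParMat {F : Type*} [Field F] {n : ℕ} (r : ℕ) (M : Matrix (Fin n) (Fin n) F) : Prop :=
  ∀ i j : Fin n, r ≤ (i : ℕ) → (j : ℕ) < r → M i j = 0

lemma isParMat_iff_mapsTo {F : Type*} [Field F] {n r : ℕ} {M : Matrix (Fin n) (Fin n) F} :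
    IsParMat r M ↔ ∀ v ∈ stdFlag F n r, M.mulVec v ∈ stdFlag F n r := by
  constructor
  · intro h v hv i hi
    simp only [Matrix.mulVec, dotProduct]
    refine Finset.sum_eq_zero fun j _ => ?_
    rcases lt_or_ge (j : ℕ) r with hj | hj
    · rw [h i j hi hj, zero_mul]
    · rw [hv j hj, mul_zero]
  · intro h i j hi hj
    have hmem : (Pi.single j (1 : F)) ∈ stdFlag F n r := by
      intro k hk
      apply Pi.single_eq_of_ne
      intro hkj
      rw [hkj] at hk
      omega
    have h2 := h _ hmem i hi
    rw [Matrix.mulVec_single] at h2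
    simpa using h2

/-- The maximal parabolic subgroup of `GL_n(F)` of type `(r, n-r)`: block upper-triangular
invertible matrices, i.e. the stabilizer of the span of the first `r` standard basis vectors. -/
def Parabolic (F : Type*) [Field F] (n r : ℕ) : Subgroup (GL (Fin n) F) where
  carrier := {g | IsParMat r (g : Matrix (Fin n) (Fin n) F)}
  one_mem' := by
    intro i j hi hj
    have hne : i ≠ j := by
      intro h; rw [h] at hi; omega
    exact Matrix.one_apply_ne hne
  mul_mem' := by
    intro a b ha hb i j hi hj
    show ((a : Matrix (Fin n) (Fin n) F) * b) i j = 0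
    rw [Matrix.mul_apply]
    refine Finset.sum_eq_zero fun k _ => ?_
    rcases lt_or_ge (k : ℕ) r with hk | hk
    · rw [ha i k hi hk, zero_mul]
    · rw [hb k j hk hj, mul_zero]
  inv_mem' := by
    intro g hg
    have hres : ∀ v ∈ stdFlag F n r,
        (Matrix.toLin' (g : Matrix (Fin n) (Fin n) F)) v ∈ stdFlag F n r := by
      intro v hv
      simpa [Matrix.toLin'_apply] using isParMat_iff_mapsTo.mp hg v hv
    set f := (Matrix.toLin' (g : Matrix (Fin n) (Fin n) F)).restrict hres with hf
    have hginj : Function.Injective ((g : Matrix (Fin n) (Fin n) F).mulVec) :=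
      Matrix.mulVec_injective_iff_isUnit.mpr ⟨g, rfl⟩
    have hinj : Function.Injective f := by
      intro x y hxy
      apply Subtype.ext
      apply hginj
      have h3 := congrArg Subtype.val hxy
      simpa [hf, LinearMap.restrict_apply, Matrix.toLin'_apply] using h3
    have hsurj := (LinearMap.injective_iff_surjective (f := f)).mp hinj
    rw [Set.mem_setOf_eq, isParMat_iff_mapsTo]
    intro v hv
    obtain ⟨w, hw⟩ := hsurj ⟨v, hv⟩
    have hw' : (g : Matrix (Fin n) (Fin n) F).mulVec w.1 = v := by
      have h4 := congrArg Subtype.val hw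
      simpa [hf, LinearMap.restrict_apply, Matrix.toLin'_apply] using h4
    have hcalc : ((g⁻¹ : GL (Fin n) F) : Matrix (Fin n) (Fin n) F).mulVec v = w.1 := by
      rw [← hw', Matrix.mulVec_mulVec, ← Units.val_mul, inv_mul_cancel, Units.val_one,
        Matrix.one_mulVec]
    rw [hcalc]
    exact w.2

/-- Identification of `Fin n` with `Fin r ⊕ Fin (n-r)`. -/
def blockEquiv (n r : ℕ) (h : r ≤ n) : Fin r ⊕ Fin (n - r) ≃ Fin n :=
  finSumFinEquiv.trans (finCongr (Nat.add_sub_cancel' h))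

/-- The upper-left `r × r` block `A_g` of a matrix `g ∈ GL_n(F)`. -/
def Ablock {F : Type*} [Field F] {n : ℕ} (r : ℕ) (h : r ≤ n) (g : GL (Fin n) F) :
    Matrix (Fin r) (Fin r) F :=
  Matrix.toBlocks₁₁
    ((g : Matrix (Fin n) (Fin n) F).submatrix (blockEquiv n r h) (blockEquiv n r h))

/-- The lower-right `(n-r) × (n-r)` block `D_g` of a matrix `g ∈ GL_n(F)`. -/
def Dblock {F : Type*} [Field F] {n : ℕ} (r : ℕ) (h : r ≤ n) (g : GL (Fin n) F) :
    Matrix (Fin (n - r)) (Fin (n - r)) F :=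
  Matrix.toBlocks₂₂
    ((g : Matrix (Fin n) (Fin n) F).submatrix (blockEquiv n r h) (blockEquiv n r h))

lemma isUnit_det_blocks {F : Type*} [Field F] {n r : ℕ} (h : r ≤ n) {g : GL (Fin n) F}
    (hg : g ∈ Parabolic F n r) :
    IsUnit (Ablock r h g).det ∧ IsUnit (Dblock r h g).det := by
  set M := (g : Matrix (Fin n) (Fin n) F).submatrix (blockEquiv n r h) (blockEquiv n r h)
    with hM
  have h21 : M.toBlocks₂₁ = 0 := by
    ext i j
    show (g : Matrix (Fin n) (Fin n) F)
      (blockEquiv n r h (Sum.inr i)) (blockEquiv n r h (Sum.inl j)) = 0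
    apply hg
    · show r ≤ ((blockEquiv n r h) (Sum.inr i) : ℕ)
      simp [blockEquiv]
    · show ((blockEquiv n r h) (Sum.inl j) : ℕ) < r
      simp [blockEquiv]
  have hdet : (g : Matrix (Fin n) (Fin n) F).det = (Ablock r h g).det * (Dblock r h g).det := by
    have h1 : M.det = (g : Matrix (Fin n) (Fin n) F).det :=
      Matrix.det_submatrix_equiv_self _ _
    have h2 : M = Matrix.fromBlocks M.toBlocks₁₁ M.toBlocks₁₂ 0 M.toBlocks₂₂ := by
      rw [← h21]
      exact (Matrix.fromBlocks_toBlocks M).symm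
    rw [← h1]
    conv_lhs => rw [h2]
    rw [Matrix.det_fromBlocks_zero₂₁]
    rfl
  have hu : IsUnit ((g : Matrix (Fin n) (Fin n) F).det) :=
    (Matrix.isUnit_iff_isUnit_det _).mp ⟨g, rfl⟩
  rw [hdet] at hu
  constructor
  · exact isUnit_of_mul_isUnit_left hu
  · rw [mul_comm] at hu
    exact isUnit_of_mul_isUnit_left hu

/-- The determinant of the upper-left block of an element of `P`, as a unit of `F`. -/
noncomputable def AblockDetUnit {F : Type*} [Field F] {n r : ℕ} (h : r ≤ n)
    (g : GL (Fin n) F) (hg : g ∈ Parabolic F n r) : Fˣ :=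
  ((isUnit_det_blocks h hg).1).unit

/-- The determinant of the lower-right block of an element of `P`, as a unit of `F`. -/
noncomputable def DblockDetUnit {F : Type*} [Field F] {n r : ℕ} (h : r ≤ n)
    (g : GL (Fin n) F) (hg : g ∈ Parabolic F n r) : Fˣ :=
  ((isUnit_det_blocks h hg).2).unit
set_option linter.unusedSectionVars false
section EDefs

variable (F : Type*) [NontriviallyNormedField F] [IsUltrametricDist F]
  [CompleteSpace F] [LocallyCompactSpace F] (n r : ℕ) (hrn : r ≤ n)
  (N : Type*) [AddCommGroup N] [TopologicalSpace N] [IsTopologicalAddGroup N]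

/-- The group `Ẽ(λ)` of pairs `(Φ, k)` with `Φ : GL_n(F) → N` continuous satisfying
`Φ(g·p) = Φ(g) + k·λ(det A_p)` for all `g ∈ GL_n(F)` and `p ∈ P`. -/
def Etilde (lam : Fˣ → N) : AddSubgroup ((GL (Fin n) F → N) × ℤ) where
  carrier := {q | Continuous q.1 ∧ ∀ (g p : GL (Fin n) F) (hp : p ∈ Parabolic F n r),
      q.1 (g * p) = q.1 g + q.2 • lam (AblockDetUnit hrn p hp)}
  add_mem' := by
    rintro a b ⟨hac, ha⟩ ⟨hbc, hb⟩
    refine ⟨hac.add hbc, fun g p hp => ?_⟩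
    show a.1 (g * p) + b.1 (g * p) = (a.1 g + b.1 g) + (a.2 + b.2) • lam _
    rw [ha g p hp, hb g p hp, add_zsmul]
    abel
  zero_mem' := by
    refine ⟨continuous_const, fun g p hp => ?_⟩
    show (0 : N) = 0 + (0 : ℤ) • lam _
    simp
  neg_mem' := by
    rintro a ⟨hac, ha⟩
    refine ⟨hac.neg, fun g p hp => ?_⟩
    show -a.1 (g * p) = -a.1 g + (-a.2) • lam _
    rw [ha g p hp, neg_zsmul]
    abel

/-- The subgroup of `Ẽ(λ)` of pairs `(Φ, 0)` with `Φ` constant. -/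
def EtildeConsts (lam : Fˣ → N) : AddSubgroup ↥(Etilde F n r hrn N lam) where
  carrier := {q | q.1.2 = 0 ∧ ∃ c : N, ∀ g : GL (Fin n) F, q.1.1 g = c}
  add_mem' := by
    rintro a b ⟨ha0, c, hc⟩ ⟨hb0, d, hd⟩
    refine ⟨?_, c + d, fun g => ?_⟩
    · show a.1.2 + b.1.2 = 0
      rw [ha0, hb0]; rfl
    · show a.1.1 g + b.1.1 g = c + d
      rw [hc g, hd g]
  zero_mem' := ⟨rfl, 0, fun g => rfl⟩
  neg_mem' := by
    rintro a ⟨ha0, c, hc⟩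
    refine ⟨?_, -c, fun g => ?_⟩
    · show -a.1.2 = 0
      rw [ha0]; rfl
    · show -a.1.1 g = -c
      rw [hc g]

/-- The extension `E(λ)`: the quotient of `Ẽ(λ)` by the constant functions of degree `0`. -/
abbrev Esp (lam : Fˣ → N) :=
  ↥(Etilde F n r hrn N lam) ⧸ EtildeConsts F n r hrn N lam

/-- The degree map `E(λ) → ℤ`, `(Φ, k) ↦ k`. -/
def Edeg (lam : Fˣ → N) : Esp F n r hrn N lam →+ ℤ :=
  QuotientAddGroup.lift _
    ((AddMonoidHom.snd (GL (Fin n) F → N) ℤ).comp (Etilde F n r hrn N lam).subtype)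
    (by rintro q ⟨h0, -⟩; exact h0)

@[simp] lemma Edeg_mk (lam : Fˣ → N) (q : ↥(Etilde F n r hrn N lam)) :
    Edeg F n r hrn N lam (QuotientAddGroup.mk q) = q.1.2 := rfl

/-- The group of continuous right-`P`-invariant functions `GL_n(F) → N`; modulo constants
this is the generalized Steinberg representation `v_r(N)`. -/
def SteinbergFns : AddSubgroup (GL (Fin n) F → N) where
  carrier := {Φ | Continuous Φ ∧ ∀ (g p : GL (Fin n) F), p ∈ Parabolic F n r → Φ (g * p) = Φ g}
  add_mem' := by
    rintro a b ⟨hac, ha⟩ ⟨hbc, hb⟩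
    exact ⟨hac.add hbc, fun g p hp => by
      show a (g * p) + b (g * p) = a g + b g
      rw [ha g p hp, hb g p hp]⟩
  zero_mem' := ⟨continuous_const, fun _ _ _ => rfl⟩
  neg_mem' := by
    rintro a ⟨hac, ha⟩
    exact ⟨hac.neg, fun g p hp => by
      show -a (g * p) = -a g
      rw [ha g p hp]⟩

/-- `v_r(N)`-vectors, included into `Ẽ(λ)` as the pairs `(Φ, 0)`. -/
def stIncl (lam : Fˣ → N) : ↥(SteinbergFns F n r N) →+ ↥(Etilde F n r hrn N lam) where
  toFun := fun Φ => ⟨(Φ.1, 0), Φ.2.1, fun g p hp => by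
    show Φ.1 (g * p) = Φ.1 g + (0 : ℤ) • lam _
    rw [Φ.2.2 g p hp]; simp⟩
  map_zero' := rfl
  map_add' := fun a b => by
    apply Subtype.ext
    apply Prod.ext rfl
    show (0 : ℤ) = 0 + 0
    simp

/-- The inclusion of `v_r(N)` into `E(λ)` as the classes of pairs `(Φ, 0)`. -/
def stHom (lam : Fˣ → N) : ↥(SteinbergFns F n r N) →+ Esp F n r hrn N lam :=
  (QuotientAddGroup.mk' (EtildeConsts F n r hrn N lam)).comp (stIncl F n r hrn N lam)

@[simp] lemma Edeg_stHom (lam : Fˣ → N) (v : ↥(SteinbergFns F n r N)) :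
    Edeg F n r hrn N lam (stHom F n r hrn N lam v) = 0 := rfl

/-- Left translation on `Ẽ(λ)` by an element of `GL_n(F)`. -/
def EtransAux (lam : Fˣ → N) (h : GL (Fin n) F) :
    ↥(Etilde F n r hrn N lam) →+ ↥(Etilde F n r hrn N lam) where
  toFun := fun q => ⟨(fun g => q.1.1 (h⁻¹ * g), q.1.2),
    q.2.1.comp ((continuous_mul_left h⁻¹)),
    fun g p hp => by
      show q.1.1 (h⁻¹ * (g * p)) = q.1.1 (h⁻¹ * g) + q.1.2 • lam _
      rw [← mul_assoc]
      exact q.2.2 (h⁻¹ * g) p hp⟩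
  map_zero' := rfl
  map_add' := fun a b => rfl

/-- The `GL_n(F)`-action on `E(λ)` by left translation, `(h • Φ)(g) = Φ(h⁻¹ g)`. -/
def Etrans (lam : Fˣ → N) (h : GL (Fin n) F) :
    Esp F n r hrn N lam →+ Esp F n r hrn N lam :=
  QuotientAddGroup.map _ _ (EtransAux F n r hrn N lam h) (by
    rintro q ⟨h0, c, hc⟩
    exact ⟨h0, c, fun g => hc _⟩)

@[simp] lemma Etrans_mk (lam : Fˣ → N) (h : GL (Fin n) F) (q : ↥(Etilde F n r hrn N lam)) :
    Etrans F n r hrn N lam h (QuotientAddGroup.mk q)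
      = QuotientAddGroup.mk (EtransAux F n r hrn N lam h q) := rfl

end EDefs



open Filter

section Pick
open scoped Classical
variable {F : Type*} [NontriviallyNormedField F] [IsUltrametricDist F]
variable {ι : Type*} [Fintype ι] [Nonempty ι]

noncomputable def pickSet (x : ι → F) : Finset ι :=
  Finset.univ.filter fun i => ∀ j, ‖x j‖ ≤ ‖x i‖

lemma pickSet_nonempty (x : ι → F) : (pickSet x).Nonempty := by
  obtain ⟨i, -, hi⟩ := Finset.exists_max_image Finset.univ (fun i => ‖x i‖)
    ⟨Classical.arbitrary ι, Finset.mem_univ _⟩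
  exact ⟨i, Finset.mem_filter.2 ⟨Finset.mem_univ _, fun j => hi j (Finset.mem_univ _)⟩⟩

noncomputable def pickIdx (x : ι → F) : ι :=
  (Fintype.equivFin ι).symm (((pickSet x).image (Fintype.equivFin ι)).min'
    ((pickSet_nonempty x).image _))

lemma pickIdx_mem (x : ι → F) : pickIdx x ∈ pickSet x := by
  have h := Finset.min'_mem ((pickSet x).image (Fintype.equivFin ι))
    ((pickSet_nonempty x).image _)
  obtain ⟨a, ha, hae⟩ := Finset.mem_image.1 h
  rw [pickIdx, ← hae, Equiv.symm_apply_apply]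
  exact ha

lemma pickIdx_congr {x y : ι → F} (h : pickSet x = pickSet y) : pickIdx x = pickIdx y := by
  have key : ∀ (s t : Finset ι) (_ : s = t) (hs : (s.image (Fintype.equivFin ι)).Nonempty)
      (ht : (t.image (Fintype.equivFin ι)).Nonempty),
      (s.image (Fintype.equivFin ι)).min' hs = (t.image (Fintype.equivFin ι)).min' ht := by
    rintro s t rfl hs ht; rfl
  unfold pickIdx
  exact congrArg (Fintype.equivFin ι).symm (key _ _ h _ _)

lemma le_pick (x : ι → F) (j : ι) : ‖x j‖ ≤ ‖x (pickIdx x)‖ :=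
  (Finset.mem_filter.1 (pickIdx_mem x)).2 j

lemma pick_ne_zero {x : ι → F} (hx : x ≠ 0) : x (pickIdx x) ≠ 0 := by
  obtain ⟨j, hj⟩ : ∃ j, x j ≠ 0 := by
    by_contra hc
    push_neg at hc
    exact hx (funext hc)
  intro h0
  have := le_pick x j
  rw [h0, norm_zero] at this
  exact hj (norm_eq_zero.1 (le_antisymm this (norm_nonneg _)))

lemma pickSet_smul (c : F) (hc : c ≠ 0) (x : ι → F) :
    pickSet (fun i => c * x i) = pickSet x := by
  unfold pickSet
  apply Finset.filter_congr
  intro i _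
  simp only [norm_mul]
  have hcpos : 0 < ‖c‖ := norm_pos_iff.2 hc
  constructor
  · intro h j
    exact le_of_mul_le_mul_left (h j) hcpos
  · intro h j
    exact mul_le_mul_of_nonneg_left (h j) (norm_nonneg c)

lemma pickSet_stable {x : ι → F} (hx : x ≠ 0) :
    ∃ ε > 0, ∀ y : ι → F, (∀ i, ‖y i - x i‖ < ε) →
      pickSet y = pickSet x ∧ ‖y (pickIdx x)‖ = ‖x (pickIdx x)‖ := by
  classical
  set i0 := pickIdx x with hi0
  have hxi0 : x i0 ≠ 0 := pick_ne_zero hx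
  set m := ‖x i0‖ with hm
  have hmpos : 0 < m := norm_pos_iff.2 hxi0
  set s : Finset ι := Finset.univ.filter (fun j => x j ≠ 0) with hs
  have hmem0 : i0 ∈ s := by
    rw [hs, Finset.mem_filter]
    exact ⟨Finset.mem_univ i0, hxi0⟩
  have hsne : s.Nonempty := ⟨i0, hmem0⟩
  refine ⟨s.inf' hsne (fun j => ‖x j‖), ?_, ?_⟩
  · show 0 < _
    rw [Finset.lt_inf'_iff]
    intro j hj
    rw [hs, Finset.mem_filter] at hj
    exact norm_pos_iff.2 hj.2
  · intro y hy
    set ε := s.inf' hsne (fun j => ‖x j‖) with hε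
    have hεm : ε ≤ m := Finset.inf'_le _ hmem0
    -- (1) norms preserved on nonzero coordinates
    have h1 : ∀ j, x j ≠ 0 → ‖y j‖ = ‖x j‖ := by
      intro j hj
      have hmemj : j ∈ s := by
        rw [hs, Finset.mem_filter]
        exact ⟨Finset.mem_univ j, hj⟩
      have hlt : ‖y j - x j‖ < ‖x j‖ := lt_of_lt_of_le (hy j) (Finset.inf'_le _ hmemj)
      have h1 : ‖y j‖ ≤ ‖x j‖ := by
        calc ‖y j‖ = ‖x j + (y j - x j)‖ := by ring_nf
          _ ≤ max ‖x j‖ ‖y j - x j‖ := IsUltrametricDist.norm_add_le_max _ _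
          _ ≤ ‖x j‖ := max_le le_rfl hlt.le
      rcases eq_or_lt_of_le h1 with h | h
      · exact h
      · exfalso
        have : ‖x j‖ ≤ max ‖y j‖ ‖x j - y j‖ := by
          calc ‖x j‖ = ‖y j + (x j - y j)‖ := by ring_nf
            _ ≤ max ‖y j‖ ‖x j - y j‖ := IsUltrametricDist.norm_add_le_max _ _
        rw [norm_sub_rev] at hlt
        rcases max_cases ‖y j‖ ‖x j - y j‖ with ⟨he, -⟩ | ⟨he, -⟩ <;> rw [he] at this
        · exact absurd this (not_le.2 h)
        · exact absurd this (not_le.2 hlt)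
    -- (2) small coordinates stay small
    have h2 : ∀ j, x j = 0 → ‖y j‖ < ε := by
      intro j hj
      have := hy j
      rwa [hj, sub_zero] at this
    have hyi0 : ‖y i0‖ = m := h1 i0 hxi0
    have hyle : ∀ j, ‖y j‖ ≤ m := by
      intro j
      by_cases hj : x j = 0
      · exact le_trans (h2 j hj).le hεm
      · rw [h1 j hj]
        exact le_pick x j
    have hxm : ∀ j, ‖x j‖ ≤ m := le_pick x
    constructor
    · ext j
      simp only [pickSet, Finset.mem_filter, Finset.mem_univ, true_and]
      constructor
      · intro hj
        have hjm : ‖y j‖ = m := le_antisymm (hyle j) (hyi0 ▸ hj i0)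
        have hxj : x j ≠ 0 := by
          intro h0
          exact absurd hjm (ne_of_lt (lt_of_lt_of_le (h2 j h0) hεm))
        intro k
        rw [h1 j hxj] at hjm
        rw [hjm]
        exact hxm k
      · intro hj k
        have hxjm : ‖x j‖ = m := le_antisymm (hxm j) (hj i0)
        have hxj : x j ≠ 0 := by
          intro h0
          rw [h0, norm_zero] at hxjm
          exact absurd hxjm.symm (ne_of_gt hmpos)
        rw [h1 j hxj, hxjm]
        exact hyle k
    · exact hyi0

end Pick

section LamF
open scoped Classical
variable {F : Type*} [NontriviallyNormedField F] [IsUltrametricDist F]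
variable {N : Type*} [AddCommGroup N] [TopologicalSpace N]

noncomputable def lamF (lam : Fˣ → N) : F → N :=
  fun t => if h : t = 0 then 0 else lam (Units.mk0 t h)

lemma lamF_unit (lam : Fˣ → N) (u : Fˣ) : lamF lam (u : F) = lam u := by
  rw [lamF, dif_neg u.ne_zero]
  congr 1
  exact Units.ext rfl

lemma lamF_mul (lam : Fˣ → N) (hlam : ∀ a b : Fˣ, lam (a * b) = lam a + lam b)
    {s t : F} (hs : s ≠ 0) (ht : t ≠ 0) :
    lamF lam (s * t) = lamF lam s + lamF lam t := by
  rw [lamF, lamF, lamF, dif_neg (mul_ne_zero hs ht), dif_neg hs, dif_neg ht]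
  rw [show Units.mk0 (s * t) (mul_ne_zero hs ht) = Units.mk0 s hs * Units.mk0 t ht from
    Units.ext rfl]
  exact hlam _ _

lemma continuousAt_lamF {lam : Fˣ → N} (hlamc : Continuous lam) {t : F} (ht : t ≠ 0) :
    ContinuousAt (lamF lam) t := by
  have hU : Continuous (fun s : {s : F // s ≠ 0} => Units.mk0 s.1 s.2) := by
    apply Units.continuous_iff.2
    constructor
    · exact continuous_subtype_val
    · exact continuous_subtype_val.inv₀ (fun s => s.2)
  have hcont : ContinuousOn (lamF lam) {s : F | s ≠ 0} := by
    rw [continuousOn_iff_continuous_restrict]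
    have : Set.domRestrict {s : F | s ≠ 0} (lamF lam)
        = fun s => lam (Units.mk0 s.1 s.2) := by
      funext s
      simp only [Set.domRestrict_apply, lamF, dif_neg s.2]
    rw [this]
    exact hlamc.comp hU
  exact hcont.continuousAt (IsOpen.mem_nhds isOpen_ne ht)

variable {ι : Type*} [Fintype ι] [Nonempty ι]

noncomputable def lamPick (lam : Fˣ → N) (x : ι → F) : N :=
  lamF lam (x (pickIdx x))

lemma lamPick_smul (lam : Fˣ → N) (hlam : ∀ a b : Fˣ, lam (a * b) = lam a + lam b)
    {c : F} (hc : c ≠ 0) {x : ι → F} (hx : x ≠ 0) :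
    lamPick lam (fun i => c * x i) = lamF lam c + lamPick lam x := by
  have h1 : pickIdx (fun i => c * x i) = pickIdx x := pickIdx_congr (pickSet_smul c hc x)
  rw [lamPick, h1, lamPick, lamF_mul lam hlam hc (pick_ne_zero hx)]

lemma continuousAt_lamPick {lam : Fˣ → N} (hlamc : Continuous lam) {x : ι → F} (hx : x ≠ 0) :
    ContinuousAt (lamPick lam) x := by
  obtain ⟨ε, hε, hstab⟩ := pickSet_stable hx
  have hev : (lamPick lam : (ι → F) → N) =ᶠ[nhds x] (fun y => lamF lam (y (pickIdx x))) := by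
    filter_upwards [Metric.ball_mem_nhds x hε] with y hy
    have hcoord : ∀ i, ‖y i - x i‖ < ε := by
      intro i
      calc ‖y i - x i‖ = dist (y i) (x i) := (dist_eq_norm _ _).symm
        _ ≤ dist y x := dist_le_pi_dist y x i
        _ < ε := Metric.mem_ball.1 hy
    have h := hstab y hcoord
    rw [lamPick, pickIdx_congr h.1]
  have hc2 : ContinuousAt (fun y : ι → F => lamF lam (y (pickIdx x))) x :=
    ContinuousAt.comp (x := x) (g := lamF lam) (f := fun y : ι → F => y (pickIdx x))
      (continuousAt_lamF hlamc (pick_ne_zero hx)) ((continuous_apply (pickIdx x)).continuousAt)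
  exact hc2.congr hev.symm

end LamF

section Minors
variable {F : Type*} [Field F] {n r : ℕ}

lemma blockEquiv_inl (hrn : r ≤ n) (k : Fin r) :
    blockEquiv n r hrn (Sum.inl k) = Fin.castLE hrn k := by
  apply Fin.ext
  simp [blockEquiv]

lemma blockEquiv_inr_val (hrn : r ≤ n) (k : Fin (n - r)) :
    r ≤ (blockEquiv n r hrn (Sum.inr k) : ℕ) := by
  simp [blockEquiv]

lemma Ablock_eq_submatrix (hrn : r ≤ n) (g : GL (Fin n) F) :
    Ablock r hrn g
      = (g : Matrix (Fin n) (Fin n) F).submatrix (Fin.castLE hrn) (Fin.castLE hrn) := by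
  ext i j
  simp only [Ablock, Matrix.toBlocks₁₁, Matrix.of_apply, Matrix.submatrix_apply]
  rw [blockEquiv_inl, blockEquiv_inl]

noncomputable def minors (hrn : r ≤ n) (g : GL (Fin n) F) : (Fin r → Fin n) → F :=
  fun e => ((g : Matrix (Fin n) (Fin n) F).submatrix e (Fin.castLE hrn)).det

lemma continuous_minors {F : Type*} [NontriviallyNormedField F] {n r : ℕ} (hrn : r ≤ n) :
    Continuous fun g : GL (Fin n) F => minors (F := F) hrn g := by
  apply continuous_pi
  intro e
  exact Continuous.matrix_det (Continuous.matrix_submatrix Units.continuous_val e (Fin.castLE hrn))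

lemma minors_mul (hrn : r ≤ n) (g p : GL (Fin n) F) (hp : p ∈ Parabolic F n r)
    (e : Fin r → Fin n) :
    minors hrn (g * p) e = (Ablock r hrn p).det * minors hrn g e := by
  have hsub : ((g * p : GL (Fin n) F) : Matrix (Fin n) (Fin n) F).submatrix e (Fin.castLE hrn)
      = ((g : Matrix (Fin n) (Fin n) F).submatrix e id)
        * ((p : Matrix (Fin n) (Fin n) F).submatrix id (Fin.castLE hrn)) := by
    rw [Units.val_mul]
    exact Matrix.submatrix_mul _ _ e id (Fin.castLE hrn) Function.bijective_id
  have hstep : ((g : Matrix (Fin n) (Fin n) F).submatrix e id)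
        * ((p : Matrix (Fin n) (Fin n) F).submatrix id (Fin.castLE hrn))
      = ((g : Matrix (Fin n) (Fin n) F).submatrix e (Fin.castLE hrn))
        * ((p : Matrix (Fin n) (Fin n) F).submatrix (Fin.castLE hrn) (Fin.castLE hrn)) := by
    ext i j
    rw [Matrix.mul_apply, Matrix.mul_apply]
    simp only [Matrix.submatrix_apply, id]
    rw [← Equiv.sum_comp (blockEquiv n r hrn)
      (fun k => (g : Matrix (Fin n) (Fin n) F) (e i) k
        * (p : Matrix (Fin n) (Fin n) F) k (Fin.castLE hrn j))]
    rw [Fintype.sum_sum_type]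
    have hz : ∀ k : Fin (n - r),
        (g : Matrix (Fin n) (Fin n) F) (e i) (blockEquiv n r hrn (Sum.inr k)) *
          (p : Matrix (Fin n) (Fin n) F) (blockEquiv n r hrn (Sum.inr k)) (Fin.castLE hrn j)
          = 0 := by
      intro k
      rw [hp _ _ (blockEquiv_inr_val hrn k) j.isLt, mul_zero]
    rw [Finset.sum_eq_zero (fun k _ => hz k), add_zero]
    exact Finset.sum_congr rfl (fun k _ => by rw [blockEquiv_inl])
  show (((g * p : GL (Fin n) F) : Matrix (Fin n) (Fin n) F).submatrix e (Fin.castLE hrn)).det = _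
  rw [hsub, hstep, Matrix.det_mul, Ablock_eq_submatrix, mul_comm]
  rfl

lemma minors_ne_zero (hrn : r ≤ n) (g : GL (Fin n) F) : minors hrn g ≠ 0 := by
  classical
  set B : Matrix (Fin n) (Fin r) F
    := (g : Matrix (Fin n) (Fin n) F).submatrix id (Fin.castLE hrn) with hB
  have hcols : LinearIndependent F (fun j => Bᵀ j) := by
    have hg : LinearIndependent F (fun i => ((g : Matrix (Fin n) (Fin n) F))ᵀ i) :=
      Matrix.linearIndependent_cols_iff_isUnit.2 ⟨g, rfl⟩
    have heq : (fun j : Fin r => Bᵀ j)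
        = (fun i => ((g : Matrix (Fin n) (Fin n) F))ᵀ i) ∘ (Fin.castLE hrn) := by
      funext j; ext i; rfl
    rw [heq]
    exact hg.comp _ (Fin.castLE_injective hrn)
  have hinj : Function.Injective B.mulVec := Matrix.mulVec_injective_iff.2 hcols
  have hrank : B.rank = r := by
    have h1 : LinearMap.ker B.mulVecLin = ⊥ := LinearMap.ker_eq_bot.2 hinj
    have h2 := LinearMap.finrank_range_add_finrank_ker B.mulVecLin
    rw [h1, finrank_bot, add_zero] at h2
    rw [Matrix.rank, h2]
    simp
  have hspan : Submodule.span F (Set.range (fun i : Fin n => B i)) = ⊤ := by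
    apply Submodule.eq_top_of_finrank_eq
    have h3 := B.rank_eq_finrank_span_row
    rw [hrank] at h3
    erw [← h3]
    simp
  obtain ⟨t, hts, htspan, htind⟩ :=
    exists_linearIndependent F (Set.range (fun i : Fin n => B i))
  rw [hspan] at htspan
  haveI hfin : Fintype t := (htind.setFinite).fintype
  have hbasis : Module.Basis t F (Fin r → F) := Module.Basis.mk htind (by rw [Subtype.range_coe, htspan])
  have hcard : Fintype.card t = r := by
    have h4 := Module.finrank_eq_card_basis hbasis
    simp only [Module.finrank_pi, Fintype.card_fin] at h4
    omega
  set σ : Fin r ≃ t := (Fintype.equivFinOfCardEq hcard).symm with hσ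
  have hchoose : ∀ k : Fin r, ∃ i : Fin n, B i = (σ k : Fin r → F) :=
    fun k => hts (σ k).2
  set e : Fin r → Fin n := fun k => (hchoose k).choose with he
  set M : Matrix (Fin r) (Fin r) F := B.submatrix e id with hM
  have hrows : (fun k => M k) = fun k => (σ k : Fin r → F) := by
    funext k
    exact (hchoose k).choose_spec
  have hMind : LinearIndependent F (fun k => M k) := by
    rw [hrows]
    exact htind.comp σ σ.injective
  have hMunit : IsUnit M := Matrix.linearIndependent_rows_iff_isUnit.1 hMind
  have hdet : M.det ≠ 0 := (Matrix.isUnit_iff_isUnit_det M).1 hMunit |>.ne_zero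
  intro h0
  apply hdet
  have : minors hrn g e = M.det := rfl
  rw [← this, h0]
  rfl

end Minors

section PhiDef
variable {F : Type*} [NontriviallyNormedField F] [IsUltrametricDist F]
variable {N : Type*} [AddCommGroup N] [TopologicalSpace N]
variable {n r : ℕ}

noncomputable def Phi (lam : Fˣ → N) (hn : 0 < n) (hrn : r ≤ n) (g : GL (Fin n) F) : N :=
  letI : Nonempty (Fin n) := ⟨⟨0, hn⟩⟩
  lamPick lam (minors hrn g)

lemma continuous_Phi (lam : Fˣ → N) (hlamc : Continuous lam) (hn : 0 < n) (hrn : r ≤ n) :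
    Continuous (Phi (F := F) lam hn hrn) := by
  letI : Nonempty (Fin n) := ⟨⟨0, hn⟩⟩
  rw [continuous_iff_continuousAt]
  intro g
  exact ContinuousAt.comp (x := g) (g := lamPick lam)
    (continuousAt_lamPick hlamc (minors_ne_zero hrn g)) (continuous_minors hrn).continuousAt

lemma Phi_cocycle (lam : Fˣ → N) (hlam : ∀ a b : Fˣ, lam (a * b) = lam a + lam b)
    (hn : 0 < n) (hrn : r ≤ n) (g p : GL (Fin n) F) (hp : p ∈ Parabolic F n r) :
    Phi lam hn hrn (g * p) = Phi lam hn hrn g + lam (AblockDetUnit hrn p hp) := by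
  letI : Nonempty (Fin n) := ⟨⟨0, hn⟩⟩
  have hmin : minors hrn (g * p)
      = fun e => ((AblockDetUnit hrn p hp : Fˣ) : F) * minors hrn g e := by
    funext e
    rw [minors_mul hrn g p hp e, AblockDetUnit, IsUnit.unit_spec]
  have hc : ((AblockDetUnit hrn p hp : Fˣ) : F) ≠ 0 := (AblockDetUnit hrn p hp).ne_zero
  rw [Phi, Phi, hmin, lamPick_smul lam hlam hc (minors_ne_zero hrn g), lamF_unit, add_comm]

end PhiDef

section DiagSwap
variable {F : Type*} [Field F] {n r : ℕ}

/-- The diagonal matrix with `a` at position `i0` and `1` elsewhere, as an element of `GL_n`. -/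
def diagUnit (a : Fˣ) (i0 : Fin n) : GL (Fin n) F where
  val := Matrix.diagonal (fun i => if i = i0 then (a : F) else 1)
  inv := Matrix.diagonal (fun i => if i = i0 then ((a⁻¹ : Fˣ) : F) else 1)
  val_inv := by
    rw [Matrix.diagonal_mul_diagonal]
    have h : (fun i : Fin n => (if i = i0 then (a : F) else 1)
        * (if i = i0 then ((a⁻¹ : Fˣ) : F) else 1)) = fun _ => (1 : F) := by
      funext i; by_cases h : i = i0 <;> simp [h]
    rw [h, Matrix.diagonal_one]
  inv_val := by
    rw [Matrix.diagonal_mul_diagonal]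
    have h : (fun i : Fin n => (if i = i0 then ((a⁻¹ : Fˣ) : F) else 1)
        * (if i = i0 then (a : F) else 1)) = fun _ => (1 : F) := by
      funext i; by_cases h : i = i0 <;> simp [h]
    rw [h, Matrix.diagonal_one]

lemma diagUnit_mem (a : Fˣ) (i0 : Fin n) : diagUnit a i0 ∈ Parabolic F n r := by
  intro i j hi hj
  exact Matrix.diagonal_apply_ne _ (fun hc => by rw [hc] at hi; omega)

lemma AblockDetUnit_diagUnit_lt (hrn : r ≤ n) (a : Fˣ) (i0 : Fin n) (h0 : (i0 : ℕ) < r) :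
    AblockDetUnit hrn (diagUnit a i0) (diagUnit_mem a i0) = a := by
  apply Units.ext
  rw [AblockDetUnit, IsUnit.unit_spec, Ablock_eq_submatrix]
  have hsub : ((diagUnit a i0 : GL (Fin n) F) : Matrix (Fin n) (Fin n) F).submatrix
      (Fin.castLE hrn) (Fin.castLE hrn)
      = Matrix.diagonal (fun k : Fin r => if k = ⟨(i0 : ℕ), h0⟩ then (a : F) else 1) := by
    have hval : ((diagUnit a i0 : GL (Fin n) F) : Matrix (Fin n) (Fin n) F)
        = Matrix.diagonal (fun i => if i = i0 then (a : F) else 1) := rfl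
    rw [hval]
    ext i j
    rw [Matrix.submatrix_apply]
    by_cases hij : i = j
    · subst hij
      rw [Matrix.diagonal_apply_eq, Matrix.diagonal_apply_eq]
      simp [Fin.ext_iff]
    · rw [Matrix.diagonal_apply_ne _ (fun hc => hij (Fin.castLE_injective hrn hc)),
        Matrix.diagonal_apply_ne _ hij]
  rw [hsub, Matrix.det_diagonal, Finset.prod_ite_eq', if_pos (Finset.mem_univ _)]

lemma AblockDetUnit_diagUnit_ge (hrn : r ≤ n) (a : Fˣ) (i0 : Fin n) (h0 : r ≤ (i0 : ℕ)) :
    AblockDetUnit hrn (diagUnit a i0) (diagUnit_mem a i0) = 1 := by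
  apply Units.ext
  rw [AblockDetUnit, IsUnit.unit_spec, Ablock_eq_submatrix]
  have hsub : ((diagUnit a i0 : GL (Fin n) F) : Matrix (Fin n) (Fin n) F).submatrix
      (Fin.castLE hrn) (Fin.castLE hrn) = (1 : Matrix (Fin r) (Fin r) F) := by
    have hval : ((diagUnit a i0 : GL (Fin n) F) : Matrix (Fin n) (Fin n) F)
        = Matrix.diagonal (fun i => if i = i0 then (a : F) else 1) := rfl
    rw [hval]
    ext i j
    rw [Matrix.submatrix_apply]
    by_cases hij : i = j
    · subst hij
      rw [Matrix.diagonal_apply_eq, Matrix.one_apply_eq, if_neg]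
      intro hc
      have hv : (i : ℕ) = (i0 : ℕ) := congrArg Fin.val hc
      omega
    · rw [Matrix.diagonal_apply_ne _ (fun hc => hij (Fin.castLE_injective hrn hc)),
        Matrix.one_apply_ne hij]
  rw [hsub, Matrix.det_one]
  rfl

/-- The permutation matrix of the transposition `(i0 i1)`. -/
def swapMat (i0 i1 : Fin n) : Matrix (Fin n) (Fin n) F :=
  Matrix.of fun i j => if i = Equiv.swap i0 i1 j then (1 : F) else 0

lemma swapMat_mul (i0 i1 : Fin n) (M : Matrix (Fin n) (Fin n) F) (i j : Fin n) :
    ((swapMat i0 i1 : Matrix (Fin n) (Fin n) F) * M) i j = M (Equiv.swap i0 i1 i) j := by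
  rw [Matrix.mul_apply]
  have hcond : ∀ k : Fin n, (i = Equiv.swap i0 i1 k) = (k = Equiv.swap i0 i1 i) := by
    intro k
    apply propext
    constructor <;> rintro rfl <;> rw [Equiv.swap_apply_self]
  simp only [swapMat, Matrix.of_apply, hcond, ite_mul, one_mul, zero_mul]
  rw [Finset.sum_ite_eq' Finset.univ (Equiv.swap i0 i1 i) (fun k => M k j),
    if_pos (Finset.mem_univ _)]

lemma mul_swapMat (i0 i1 : Fin n) (M : Matrix (Fin n) (Fin n) F) (i j : Fin n) :
    ((M * swapMat i0 i1 : Matrix (Fin n) (Fin n) F)) i j = M i (Equiv.swap i0 i1 j) := by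
  rw [Matrix.mul_apply]
  simp only [swapMat, Matrix.of_apply, mul_ite, mul_one, mul_zero]
  rw [Finset.sum_ite_eq' Finset.univ (Equiv.swap i0 i1 j) (fun k => M i k),
    if_pos (Finset.mem_univ _)]

lemma swapMat_mul_swapMat (i0 i1 : Fin n) :
    (swapMat i0 i1 : Matrix (Fin n) (Fin n) F) * swapMat i0 i1 = 1 := by
  ext i j
  rw [swapMat_mul]
  show (if Equiv.swap i0 i1 i = Equiv.swap i0 i1 j then (1:F) else 0) = _
  by_cases hij : i = j
  · rw [if_pos (by rw [hij]), hij, Matrix.one_apply_eq]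
  · rw [if_neg (fun hc => hij ((Equiv.swap i0 i1).injective hc)), Matrix.one_apply_ne hij]

/-- The transposition `(i0 i1)` as an element of `GL_n`. -/
def swapUnit (i0 i1 : Fin n) : GL (Fin n) F where
  val := swapMat i0 i1
  inv := swapMat i0 i1
  val_inv := swapMat_mul_swapMat i0 i1
  inv_val := swapMat_mul_swapMat i0 i1

lemma swapUnit_conj (a : Fˣ) (i0 i1 : Fin n) :
    (swapUnit i0 i1 : GL (Fin n) F) * diagUnit a i0 * (swapUnit i0 i1)⁻¹ = diagUnit a i1 := by
  apply Units.ext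
  show swapMat i0 i1 * Matrix.diagonal _ * swapMat i0 i1 = Matrix.diagonal _
  ext i j
  rw [mul_swapMat, swapMat_mul]
  by_cases hij : i = j
  · subst hij
    rw [Matrix.diagonal_apply_eq, Matrix.diagonal_apply_eq]
    by_cases h1 : i = i1
    · rw [if_pos (by rw [h1, Equiv.swap_apply_right]), if_pos h1]
    · rw [if_neg, if_neg h1]
      intro hc
      apply h1
      have := congrArg (Equiv.swap i0 i1) hc
      rwa [Equiv.swap_apply_self, Equiv.swap_apply_left] at this
  · rw [Matrix.diagonal_apply_ne _ (fun hc => hij ((Equiv.swap i0 i1).injective hc)),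
      Matrix.diagonal_apply_ne _ hij]

end DiagSwap

/-- If the extensions `E(λ)` and `E(μ)` of `ℤ` by `v_r(N)` attached to
continuous homomorphisms `λ, μ : F^× → N` are equivalent — i.e. there is a
`GL_n(F)`-equivariant group isomorphism `E(λ) → E(μ)` restricting to the identity on the
common copy of `v_r(N)` and commuting with the degree maps — then `λ = μ`. -/
theorem extension_class_injective
    {F : Type*} [NontriviallyNormedField F] [IsUltrametricDist F]
    [CompleteSpace F] [LocallyCompactSpace F]
    {n r : ℕ} (hn : 2 ≤ n) (hr : 0 < r) (hrlt : r < n)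
    {N : Type*} [AddCommGroup N] [TopologicalSpace N] [IsTopologicalAddGroup N]
    (lam mu : Fˣ → N)
    (hlamc : Continuous lam) (hlam : ∀ a b : Fˣ, lam (a * b) = lam a + lam b)
    (hmuc : Continuous mu) (hmu : ∀ a b : Fˣ, mu (a * b) = mu a + mu b)
    (θ : Esp F n r hrlt.le N lam ≃+ Esp F n r hrlt.le N mu)
    (hequiv : ∀ (h : GL (Fin n) F) (x : Esp F n r hrlt.le N lam),
      θ (Etrans F n r hrlt.le N lam h x) = Etrans F n r hrlt.le N mu h (θ x))
    (hdeg : ∀ x : Esp F n r hrlt.le N lam,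
      Edeg F n r hrlt.le N mu (θ x) = Edeg F n r hrlt.le N lam x)
    (hst : ∀ v : ↥(SteinbergFns F n r N),
      θ (stHom F n r hrlt.le N lam v) = stHom F n r hrlt.le N mu v) :
    lam = mu := by
  classical
  have hn0 : 0 < n := by omega
  -- the degree-one element (Φ, 1) of Ẽ(λ)
  set Φ : GL (Fin n) F → N := Phi lam hn0 hrlt.le with hΦdef
  have hΦc : Continuous Φ := continuous_Phi lam hlamc hn0 hrlt.le
  have hΦcoc : ∀ (g p : GL (Fin n) F) (hp : p ∈ Parabolic F n r),
      Φ (g * p) = Φ g + lam (AblockDetUnit hrlt.le p hp) :=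
    fun g p hp => Phi_cocycle lam hlam hn0 hrlt.le g p hp
  have hmem : ((Φ, (1 : ℤ)) : (GL (Fin n) F → N) × ℤ) ∈ Etilde F n r hrlt.le N lam := by
    refine ⟨hΦc, fun g p hp => ?_⟩
    rw [one_smul]
    exact hΦcoc g p hp
  set q0 : ↥(Etilde F n r hrlt.le N lam) := ⟨(Φ, 1), hmem⟩ with hq0
  set x : Esp F n r hrlt.le N lam := QuotientAddGroup.mk q0 with hx
  -- a representative (Ψ, 1) of θ x
  obtain ⟨q, hq⟩ := QuotientAddGroup.mk_surjective (θ x)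
  have hdeg1 : q.1.2 = 1 := by
    have h1 := hdeg x
    rw [← hq] at h1
    rw [Edeg_mk] at h1
    exact h1.trans rfl
  set Ψ : GL (Fin n) F → N := q.1.1 with hΨdef
  obtain ⟨hΨc, hΨcoc0⟩ := q.2
  have hΨcoc : ∀ (g p : GL (Fin n) F) (hp : p ∈ Parabolic F n r),
      Ψ (g * p) = Ψ g + mu (AblockDetUnit hrlt.le p hp) := by
    intro g p hp
    have h2 := hΨcoc0 g p hp
    rwa [hdeg1, one_smul] at h2
  -- the key consequence of the equivalence
  have key : ∀ h g : GL (Fin n) F,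
      (Ψ (h⁻¹ * g) - Ψ g) - (Φ (h⁻¹ * g) - Φ g)
        = (Ψ h⁻¹ - Ψ 1) - (Φ h⁻¹ - Φ 1) := by
    intro h g
    have hvmem : (fun g => Φ (h⁻¹ * g) - Φ g) ∈ SteinbergFns F n r N := by
      refine ⟨(hΦc.comp (continuous_mul_left h⁻¹)).sub hΦc, fun g p hp => ?_⟩
      show Φ (h⁻¹ * (g * p)) - Φ (g * p) = Φ (h⁻¹ * g) - Φ g
      rw [← mul_assoc, hΦcoc (h⁻¹ * g) p hp, hΦcoc g p hp]
      abel
    set v : ↥(SteinbergFns F n r N) := ⟨_, hvmem⟩ with hv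
    have h1 : Etrans F n r hrlt.le N lam h x - x = stHom F n r hrlt.le N lam v := by
      rw [hx, Etrans_mk]
      show QuotientAddGroup.mk _ - QuotientAddGroup.mk _ = QuotientAddGroup.mk _
      rw [← QuotientAddGroup.mk_sub]
      apply congrArg
      apply Subtype.ext
      apply Prod.ext
      · rfl
      · show (1 : ℤ) - 1 = 0
        norm_num
    have h2 := congrArg θ h1
    rw [map_sub, hequiv, hst] at h2
    rw [← hq, Etrans_mk] at h2
    have h3 : QuotientAddGroup.mk
        (EtransAux F n r hrlt.le N mu h q - q - stIncl F n r hrlt.le N mu v)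
          = (0 : Esp F n r hrlt.le N mu) := by
      rw [QuotientAddGroup.mk_sub, QuotientAddGroup.mk_sub, h2]
      exact sub_self _
    rw [QuotientAddGroup.eq_zero_iff] at h3
    obtain ⟨-, c, hc⟩ := h3
    have hval : ∀ g : GL (Fin n) F, (Ψ (h⁻¹ * g) - Ψ g) - (Φ (h⁻¹ * g) - Φ g) = c := by
      intro g
      have h4 := hc g
      simp only [AddSubgroup.coe_sub, Prod.fst_sub, Pi.sub_apply] at h4
      exact h4
    have h5 := (hval g).trans (hval 1).symm
    rwa [mul_one] at h5
  -- D and the homomorphism φ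
  set D : GL (Fin n) F → N := fun g => Ψ g - Φ g with hD
  have hDmul : ∀ h g : GL (Fin n) F, D (h * g) = D h + D g - D 1 := by
    intro h g
    have h1 := key h⁻¹ g
    rw [inv_inv] at h1
    have h2 : D (h * g) - (D h + D g - D 1)
        = ((Ψ (h * g) - Ψ g) - (Φ (h * g) - Φ g)) - ((Ψ h - Ψ 1) - (Φ h - Φ 1)) := by
      simp only [hD]
      abel
    have h3 : D (h * g) - (D h + D g - D 1) = 0 := by
      rw [h2, h1, sub_self]
    have h4 := sub_eq_zero.1 h3
    exact h4
  have hDcoc : ∀ (g p : GL (Fin n) F) (hp : p ∈ Parabolic F n r),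
      D (g * p) = D g + (mu (AblockDetUnit hrlt.le p hp) - lam (AblockDetUnit hrlt.le p hp)) := by
    intro g p hp
    simp only [hD]
    rw [hΨcoc g p hp, hΦcoc g p hp]
    abel
  set φ : GL (Fin n) F → N := fun g => D g - D 1 with hφ
  have hφmul : ∀ g h : GL (Fin n) F, φ (g * h) = φ g + φ h := by
    intro g h
    simp only [hφ]
    rw [hDmul g h]
    abel
  have hlam1 : lam 1 = 0 := by
    have h1 := hlam 1 1
    rwa [one_mul, left_eq_add] at h1
  have hmu1 : mu 1 = 0 := by
    have h1 := hmu 1 1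
    rwa [one_mul, left_eq_add] at h1
  -- conclude using diagonal elements and the swap
  funext a
  set i0 : Fin n := ⟨0, hn0⟩ with hi0
  set i1 : Fin n := ⟨n - 1, by omega⟩ with hi1
  have hp1 : diagUnit a i0 ∈ Parabolic F n r := diagUnit_mem a i0
  have hp2 : diagUnit a i1 ∈ Parabolic F n r := diagUnit_mem a i1
  have hu1 : AblockDetUnit hrlt.le (diagUnit a i0) hp1 = a :=
    AblockDetUnit_diagUnit_lt hrlt.le a i0 (by rw [hi0]; exact hr)
  have hu2 : AblockDetUnit hrlt.le (diagUnit a i1) hp2 = 1 :=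
    AblockDetUnit_diagUnit_ge hrlt.le a i1 (by rw [hi1]; show r ≤ n - 1; omega)
  have hφp1 : φ (diagUnit a i0) = mu a - lam a := by
    have h1 := hDcoc 1 (diagUnit a i0) hp1
    rw [one_mul, hu1] at h1
    simp only [hφ]
    rw [h1]
    abel
  have hφp2 : φ (diagUnit a i1) = 0 := by
    have h1 := hDcoc 1 (diagUnit a i1) hp2
    rw [one_mul, hu2, hmu1, hlam1] at h1
    simp only [hφ]
    rw [h1]
    abel
  have hφ1 : φ (1 : GL (Fin n) F) = 0 := by
    simp only [hφ]
    exact sub_self _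
  have hWinv : φ (swapUnit i0 i1 : GL (Fin n) F) + φ ((swapUnit i0 i1)⁻¹ : GL (Fin n) F) = 0 := by
    rw [← hφmul, mul_inv_cancel]
    exact hφ1
  have hconj : φ (diagUnit a i1 : GL (Fin n) F) = φ (diagUnit a i0) := by
    rw [← swapUnit_conj a i0 i1, hφmul, hφmul]
    rw [show φ (swapUnit i0 i1 : GL (Fin n) F) + φ (diagUnit a i0)
        + φ ((swapUnit i0 i1)⁻¹ : GL (Fin n) F)
        = φ (diagUnit a i0)
          + (φ (swapUnit i0 i1 : GL (Fin n) F) + φ ((swapUnit i0 i1)⁻¹ : GL (Fin n) F)) from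
      by abel, hWinv, add_zero]
  rw [hφp1, hφp2] at hconj
  have : lam a = mu a := by
    have h1 := hconj.symm
    rwa [sub_eq_zero, eq_comm] at h1
  exact this
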